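/- The Baumslag–Solitar group BS(2,3) and the group ℤ[1/6] ⋊_{3/2} ℤ have the same finite quotients: for every finite group F, there exists a surjective group homomorphism BS(2,3) → F if and only if there exists a surjective group homomorphism ℤ[1/6] ⋊_{3/2} ℤ → F. -/

import Mathlib

/-- The relator of the Baumslag–Solitar group `BS(2,3) = ⟨a, t ∣ t a² t⁻¹ a⁻³⟩`,
with `a = FreeGroup.of 0` and `t = FreeGroup.of 1`. -/
def bsRels : Set (FreeGroup (Fin 2)) :=
  {FreeGroup.of 1 * FreeGroup.of 0 ^ 2 * (FreeGroup.of 1)⁻¹ * (FreeGroup.of 0 ^ 3)⁻¹}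

/-- The Baumslag–Solitar group `BS(2,3)`. -/
abbrev BS23 : Type := PresentedGroup bsRels

/-- The additive group `ℤ[1/6] = {m / 6^k : m ∈ ℤ, k ≥ 0} ⊆ ℚ`. -/
def Zinv6 : AddSubgroup ℚ where
  carrier := {q : ℚ | ∃ (m : ℤ) (k : ℕ), q = m / 6 ^ k}
  zero_mem' := ⟨0, 0, by norm_num⟩
  add_mem' := by
    rintro a b ⟨m, k, rfl⟩ ⟨m', k', rfl⟩
    refine ⟨m * 6 ^ k' + m' * 6 ^ k, k + k', ?_⟩
    have h1 : ((6 : ℚ)) ^ k ≠ 0 := by positivity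
    have h2 : ((6 : ℚ)) ^ k' ≠ 0 := by positivity
    push_cast
    field_simp [pow_add]
    ring
  neg_mem' := by
    rintro a ⟨m, k, rfl⟩
    exact ⟨-m, k, by push_cast; ring⟩

lemma mul_three_halves_mem {q : ℚ} (hq : q ∈ Zinv6) : (3 / 2 : ℚ) * q ∈ Zinv6 := by
  obtain ⟨m, k, rfl⟩ := hq
  refine ⟨9 * m, k + 1, ?_⟩
  have h6 : ((6 : ℚ)) ≠ 0 := by norm_num
  push_cast
  field_simp
  ring

lemma mul_two_thirds_mem {q : ℚ} (hq : q ∈ Zinv6) : (2 / 3 : ℚ) * q ∈ Zinv6 := by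
  obtain ⟨m, k, rfl⟩ := hq
  refine ⟨4 * m, k + 1, ?_⟩
  have h6 : ((6 : ℚ)) ≠ 0 := by norm_num
  push_cast
  field_simp
  ring

/-- Multiplication by `3/2` as an additive automorphism of `ℤ[1/6]`. -/
def threeHalves : Zinv6 ≃+ Zinv6 where
  toFun q := ⟨(3 / 2 : ℚ) * q, mul_three_halves_mem q.2⟩
  invFun q := ⟨(2 / 3 : ℚ) * q, mul_two_thirds_mem q.2⟩
  left_inv q := by ext; simp; ring_nf
  right_inv q := by ext; simp; ring_nf
  map_add' a b := by ext; simp [mul_add]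

/-- The semidirect product `ℤ[1/6] ⋊_{3/2} ℤ`, where the generator `1 ∈ ℤ` acts on
`ℤ[1/6]` by multiplication by `3/2`. -/
abbrev Z16Rtimes : Type :=
  SemidirectProduct (Multiplicative Zinv6) (Multiplicative ℤ)
    (zpowersHom (MulAut (Multiplicative Zinv6)) (AddEquiv.toMultiplicative threeHalves))

lemma one_mem_Zinv6 : (1 : ℚ) ∈ Zinv6 := ⟨1, 0, by norm_num⟩


section GroupAux

variable {F : Type} [Group F] [Finite F]

/-- In a finite group, if `m` is coprime to the order of `y`, then `y` is a power of `y ^ m`. -/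
lemma exists_pow_root (y : F) {m : ℕ} (h : Nat.Coprime m (orderOf y)) :
    ∃ u : ℕ, (y ^ m) ^ u = y := by
  set d := orderOf y with hd
  haveI : NeZero d := ⟨(orderOf_pos y).ne'⟩
  refine ⟨((m : ZMod d)⁻¹).val, ?_⟩
  rw [← pow_mul]
  have h1 : ((m * ((m : ZMod d)⁻¹).val : ℕ) : ZMod d) = ((1 : ℕ) : ZMod d) := by
    push_cast
    rw [ZMod.natCast_rightInverse ((m : ZMod d)⁻¹)]
    rw [ZMod.coe_mul_inv_eq_one m h]
  have h2 : y ^ (m * ((m : ZMod d)⁻¹).val) = y ^ 1 := by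
    rw [pow_eq_pow_iff_modEq]
    exact (ZMod.natCast_eq_natCast_iff _ _ _).1 h1
  rw [h2, pow_one]

/-- If `t a² t⁻¹ = a³` in a finite group, then the order of `a` is coprime to `6`. -/
lemma coprime_six_of_rel {a t : F} (rel : t * a ^ 2 * t⁻¹ = a ^ 3) :
    Nat.Coprime 6 (orderOf a) := by
  set n := orderOf a with hn
  have hnpos : 0 < n := orderOf_pos a
  have hsc : SemiconjBy t (a ^ 2) (a ^ 3) := by
    show t * a ^ 2 = a ^ 3 * t
    rw [← rel]; group
  have h23 : orderOf (a ^ 2) = orderOf (a ^ 3) := hsc.orderOf_eq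
  rw [orderOf_pow, orderOf_pow] at h23
  have hd2 : Nat.gcd n 2 ∣ n := Nat.gcd_dvd_left _ _
  have hd3 : Nat.gcd n 3 ∣ n := Nat.gcd_dvd_left _ _
  have hpos2 : 0 < n / Nat.gcd n 2 :=
    Nat.div_pos (Nat.le_of_dvd hnpos (Nat.gcd_dvd_left _ _)) (Nat.gcd_pos_of_pos_left _ hnpos)
  have heq : Nat.gcd n 2 = Nat.gcd n 3 := by
    have e2 : n / Nat.gcd n 2 * Nat.gcd n 2 = n := Nat.div_mul_cancel hd2
    have e3 : n / Nat.gcd n 3 * Nat.gcd n 3 = n := Nat.div_mul_cancel hd3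
    have : (n / Nat.gcd n 2) * Nat.gcd n 2 = (n / Nat.gcd n 2) * Nat.gcd n 3 := by
      rw [e2, h23, e3]
    exact Nat.eq_of_mul_eq_mul_left hpos2 this
  have h2 : Nat.gcd n 2 = 1 := by
    have ha : Nat.gcd n 2 ∣ 2 := Nat.gcd_dvd_right _ _
    have hb : Nat.gcd n 2 ∣ 3 := heq ▸ Nat.gcd_dvd_right n 3
    have := Nat.dvd_gcd ha hb
    have hg : Nat.gcd 2 3 = 1 := by decide
    rw [hg] at this
    exact Nat.dvd_one.1 this
  have h3 : Nat.gcd n 3 = 1 := heq ▸ h2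
  have c2 : Nat.Coprime 2 n := (Nat.coprime_comm).1 h2
  have c3 : Nat.Coprime 3 n := (Nat.coprime_comm).1 h3
  have : Nat.Coprime (2 * 3) n := Nat.Coprime.mul c2 c3
  norm_num at this
  exact this

/-- Powers of `a` indexed by `ZMod (orderOf a)`. -/
lemma pow_val_eq (a : F) {s : ℕ} {x : ZMod (orderOf a)} (h : (s : ZMod (orderOf a)) = x) :
    a ^ s = a ^ x.val := by
  haveI : NeZero (orderOf a) := ⟨(orderOf_pos a).ne'⟩
  rw [pow_eq_pow_iff_modEq]
  have hx : ((x.val : ℕ) : ZMod (orderOf a)) = x := ZMod.natCast_rightInverse x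
  exact (ZMod.natCast_eq_natCast_iff _ _ _).1 (by rw [h, hx])

/-- Conjugation by `t` acts on powers of `a` as multiplication by `c` with `2c = 3`. -/
lemma conj_pow_formula {a t : F} (rel : t * a ^ 2 * t⁻¹ = a ^ 3) :
    ∃ c : ZMod (orderOf a), 2 * c = 3 ∧
      ∀ x : ZMod (orderOf a), t * a ^ x.val * t⁻¹ = a ^ (c * x).val := by
  set n := orderOf a with hn
  haveI : NeZero n := ⟨(orderOf_pos a).ne'⟩
  have hcop := coprime_six_of_rel rel
  have h2 : Nat.Coprime 2 n := Nat.Coprime.coprime_dvd_left (by norm_num) hcop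
  set b := t * a * t⁻¹ with hb
  have hbo : orderOf b = orderOf a := by
    have hsc : SemiconjBy t a b := by show t * a = b * t; rw [hb]; group
    exact (SemiconjBy.orderOf_eq t hsc).symm
  have hb2 : b ^ 2 = a ^ 3 := by rw [hb, conj_pow, rel]
  obtain ⟨u, hu⟩ := exists_pow_root b (m := 2) (by rw [hbo, ← hn]; exact h2)
  have hba : b = a ^ (3 * u) := by rw [← hu, hb2, ← pow_mul]
  have h6u : a ^ (6 * u) = a ^ 3 := by
    calc a ^ (6 * u) = (a ^ (3 * u)) ^ 2 := by rw [← pow_mul]; ring_nf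
      _ = b ^ 2 := by rw [← hba]
      _ = a ^ 3 := hb2
  refine ⟨((3 * u : ℕ) : ZMod n), ?_, ?_⟩
  · have hmod := pow_eq_pow_iff_modEq.1 h6u
    have hz : ((6 * u : ℕ) : ZMod n) = ((3 : ℕ) : ZMod n) :=
      (ZMod.natCast_eq_natCast_iff _ _ _).2 hmod
    push_cast at hz ⊢
    linear_combination hz
  · intro x
    have h1 : t * a ^ x.val * t⁻¹ = a ^ (3 * u * x.val) := by
      rw [show t * a ^ x.val * t⁻¹ = (t * a * t⁻¹) ^ x.val from (conj_pow).symm, ← hb, hba,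
        ← pow_mul]
    rw [h1]
    apply pow_val_eq
    push_cast
    rw [ZMod.natCast_rightInverse x]

end GroupAux

section Emap

variable {n : ℕ} [NeZero n]

/-- The natural map `ℤ[1/6] → ZMod n` for `n` coprime to `6`. -/
noncomputable def Emap (n : ℕ) (q : Zinv6) : ZMod n :=
  ((q : ℚ).num : ZMod n) * (((q : ℚ).den : ℕ) : ZMod n)⁻¹

lemma den_coprime (hn : Nat.Coprime 6 n) {q : ℚ} (hq : q ∈ Zinv6) : Nat.Coprime q.den n := by
  obtain ⟨m, k, rfl⟩ := hq
  have hdvd : ((m : ℚ) / (6 : ℚ) ^ k).den ∣ 6 ^ k := by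
    have he : ((m : ℚ) / (6 : ℚ) ^ k) = Rat.divInt m (6 ^ k : ℤ) := by
      rw [Rat.divInt_eq_div]; push_cast; ring
    rw [he]
    have hd := Rat.den_dvd m ((6 : ℤ) ^ k)
    have : ((Rat.divInt m (6 ^ k : ℤ)).den : ℤ) ∣ ((6 ^ k : ℕ) : ℤ) := by
      push_cast
      exact_mod_cast hd
    exact_mod_cast this
  exact Nat.Coprime.coprime_dvd_left hdvd (hn.pow_left k)

lemma unit_cancel {d : ℕ} (hd : Nat.Coprime d n) {x y : ZMod n}
    (h : x * (d : ZMod n) = y * (d : ZMod n)) : x = y := by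
  have hu : IsUnit (d : ZMod n) := (ZMod.isUnit_iff_coprime d n).2 hd
  exact hu.mul_right_cancel h

lemma Emap_spec (hn : Nat.Coprime 6 n) (q : Zinv6) {m : ℤ} {d : ℕ}
    (hd : Nat.Coprime d n) (hq : (q : ℚ) * (d : ℚ) = (m : ℚ)) :
    Emap n q * (d : ZMod n) = (m : ZMod n) := by
  have hden : Nat.Coprime (q : ℚ).den n := den_coprime hn q.2
  have hqr : (q : ℚ) * ((q : ℚ).den : ℚ) = ((q : ℚ).num : ℚ) := Rat.mul_den_eq_num _
  have hint : (q : ℚ).num * (d : ℤ) = m * ((q : ℚ).den : ℤ) := by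
    have hQ : ((q : ℚ).num : ℚ) * (d : ℚ) = (m : ℚ) * ((q : ℚ).den : ℚ) := by
      calc ((q : ℚ).num : ℚ) * d = ((q : ℚ) * ((q : ℚ).den : ℚ)) * d := by rw [hqr]
        _ = ((q : ℚ) * d) * ((q : ℚ).den : ℚ) := by ring
        _ = (m : ℚ) * ((q : ℚ).den : ℚ) := by rw [hq]
    exact_mod_cast hQ
  have hz : ((q : ℚ).num : ZMod n) * (d : ZMod n)
      = (m : ZMod n) * (((q : ℚ).den : ℕ) : ZMod n) := by
    have := congrArg (fun z : ℤ => (z : ZMod n)) hint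
    push_cast at this
    exact_mod_cast this
  show ((q : ℚ).num : ZMod n) * (((q : ℚ).den : ℕ) : ZMod n)⁻¹ * (d : ZMod n) = (m : ZMod n)
  calc ((q : ℚ).num : ZMod n) * (((q : ℚ).den : ℕ) : ZMod n)⁻¹ * (d : ZMod n)
      = ((q : ℚ).num : ZMod n) * (d : ZMod n) * (((q : ℚ).den : ℕ) : ZMod n)⁻¹ := by ring
    _ = (m : ZMod n) * (((q : ℚ).den : ℕ) : ZMod n) * (((q : ℚ).den : ℕ) : ZMod n)⁻¹ := by
        rw [hz]
    _ = (m : ZMod n) * ((((q : ℚ).den : ℕ) : ZMod n) * (((q : ℚ).den : ℕ) : ZMod n)⁻¹) := by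
        ring
    _ = (m : ZMod n) := by rw [ZMod.coe_mul_inv_eq_one _ hden, mul_one]

lemma Emap_add (hn : Nat.Coprime 6 n) (q r : Zinv6) :
    Emap n (q + r) = Emap n q + Emap n r := by
  obtain ⟨mq, kq, hq⟩ := q.2
  obtain ⟨mr, kr, hr⟩ := r.2
  have h6 : ((6 : ℚ)) ≠ 0 := by norm_num
  have hd : Nat.Coprime (6 ^ (kq + kr)) n := hn.pow_left _
  have hk6 : ∀ k : ℕ, ((6 : ℚ)) ^ k ≠ 0 := fun k => pow_ne_zero _ h6
  have e1 : ((mq : ℚ) / 6 ^ kq) * ((6 ^ (kq + kr) : ℕ) : ℚ) = ((mq * 6 ^ kr : ℤ) : ℚ) := by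
    push_cast
    rw [pow_add]
    field_simp
  have e2 : ((mr : ℚ) / 6 ^ kr) * ((6 ^ (kq + kr) : ℕ) : ℚ) = ((mr * 6 ^ kq : ℤ) : ℚ) := by
    push_cast
    rw [pow_add]
    field_simp
  have h1 : Emap n q * ((6 ^ (kq + kr) : ℕ) : ZMod n) = ((mq * 6 ^ kr : ℤ) : ZMod n) :=
    Emap_spec hn q hd (by rw [hq]; exact e1)
  have h2 : Emap n r * ((6 ^ (kq + kr) : ℕ) : ZMod n) = ((mr * 6 ^ kq : ℤ) : ZMod n) :=
    Emap_spec hn r hd (by rw [hr]; exact e2)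
  have h3 : Emap n (q + r) * ((6 ^ (kq + kr) : ℕ) : ZMod n)
      = ((mq * 6 ^ kr + mr * 6 ^ kq : ℤ) : ZMod n) := by
    refine Emap_spec hn (q + r) hd ?_
    have hsum : ((q + r : Zinv6) : ℚ) = (q : ℚ) + (r : ℚ) := rfl
    rw [hsum, hq, hr, add_mul, e1, e2]
    push_cast
    ring
  apply unit_cancel hd
  rw [add_mul, h1, h2, h3]
  push_cast
  ring

lemma Emap_one (hn : Nat.Coprime 6 n) : Emap n ⟨1, one_mem_Zinv6⟩ = 1 := by
  have := Emap_spec hn ⟨1, one_mem_Zinv6⟩ (m := 1) (d := 1) (Nat.coprime_one_left n)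
    (by norm_num)
  simpa using this

lemma Emap_threeHalves (hn : Nat.Coprime 6 n) (q : Zinv6) :
    2 * Emap n (threeHalves q) = 3 * Emap n q := by
  obtain ⟨m, k, hq⟩ := q.2
  have hdk : Nat.Coprime (6 ^ k) n := hn.pow_left _
  have hc2 : Nat.Coprime 2 n := Nat.Coprime.coprime_dvd_left (by norm_num) hn
  have h6 : ((6 : ℚ)) ≠ 0 := by norm_num
  have h1 : Emap n q * ((6 ^ k : ℕ) : ZMod n) = ((m : ℤ) : ZMod n) := by
    refine Emap_spec hn q hdk ?_
    rw [hq]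
    push_cast
    exact div_mul_cancel₀ _ (pow_ne_zero _ h6)
  have h2 : Emap n (threeHalves q) * ((2 * 6 ^ k : ℕ) : ZMod n) = ((3 * m : ℤ) : ZMod n) := by
    refine Emap_spec hn (threeHalves q) (hc2.mul hdk) ?_
    have hth : ((threeHalves q : Zinv6) : ℚ) = (3 / 2 : ℚ) * (q : ℚ) := rfl
    rw [hth, hq]
    push_cast
    field_simp
  apply unit_cancel hdk
  calc 2 * Emap n (threeHalves q) * ((6 ^ k : ℕ) : ZMod n)
      = Emap n (threeHalves q) * ((2 * 6 ^ k : ℕ) : ZMod n) := by push_cast; ring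
    _ = ((3 * m : ℤ) : ZMod n) := h2
    _ = 3 * ((m : ℤ) : ZMod n) := by push_cast; ring
    _ = 3 * (Emap n q * ((6 ^ k : ℕ) : ZMod n)) := by rw [h1]
    _ = 3 * Emap n q * ((6 ^ k : ℕ) : ZMod n) := by ring

end Emap



section Forward

lemma forward_dir {F : Type} [Group F] [Finite F] {a t : F}
    (rel : t * a ^ 2 * t⁻¹ = a ^ 3) (hgen : Subgroup.closure ({a, t} : Set F) = ⊤) :
    ∃ f : Z16Rtimes →* F, Function.Surjective f := by
  set n := orderOf a with hn
  haveI : NeZero n := ⟨(orderOf_pos a).ne'⟩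
  have hcop : Nat.Coprime 6 n := coprime_six_of_rel rel
  obtain ⟨c, hc2, hcconj⟩ := conj_pow_formula rel
  have hc2' : Nat.Coprime 2 n := Nat.Coprime.coprime_dvd_left (by norm_num) hcop
  set e : Zinv6 → F := fun q => a ^ (Emap n q).val with he
  have he_add : ∀ q r : Zinv6, e (q + r) = e q * e r := by
    intro q r
    show a ^ (Emap n (q + r)).val = a ^ (Emap n q).val * a ^ (Emap n r).val
    rw [← pow_add]
    symm
    apply pow_val_eq
    push_cast
    rw [ZMod.natCast_rightInverse (Emap n q), ZMod.natCast_rightInverse (Emap n r),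
      ← Emap_add hcop]
  have he_conj : ∀ q : Zinv6, e (threeHalves q) = t * e q * t⁻¹ := by
    intro q
    show a ^ (Emap n (threeHalves q)).val = t * a ^ (Emap n q).val * t⁻¹
    rw [hcconj (Emap n q)]
    congr 1
    have h1 : 2 * Emap n (threeHalves q) = 2 * (c * Emap n q) := by
      rw [Emap_threeHalves hcop, ← mul_assoc, hc2]
    have hu : IsUnit ((2 : ℕ) : ZMod n) := (ZMod.isUnit_iff_coprime 2 n).2 hc2'
    have h2 : ((2 : ℕ) : ZMod n) * Emap n (threeHalves q)
        = ((2 : ℕ) : ZMod n) * (c * Emap n q) := by push_cast; exact h1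
    rw [hu.mul_left_cancel h2]
  set θm : MulAut (Multiplicative Zinv6) := AddEquiv.toMultiplicative threeHalves with hθm
  set ψ : Multiplicative Zinv6 →* F :=
    MonoidHom.mk' (fun q => e q.toAdd) (fun q r => he_add q.toAdd r.toAdd) with hψ
  have hψconj : ∀ q : Multiplicative Zinv6, ψ (θm q) = t * ψ q * t⁻¹ := fun q =>
    he_conj q.toAdd
  have hψconjinv : ∀ q : Multiplicative Zinv6, ψ (θm⁻¹ q) = t⁻¹ * ψ q * t := by
    intro q
    have h1 := hψconj (θm⁻¹ q)
    have h0 : θm (θm⁻¹ q) = q := by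
      rw [MulAut.inv_def]
      exact θm.apply_symm_apply q
    rw [h0] at h1
    rw [h1]
    group
  have main : ∀ (z : ℤ) (q : Multiplicative Zinv6),
      ψ ((θm ^ z) q) = t ^ z * ψ q * (t ^ z)⁻¹ := by
    intro z
    induction z using Int.induction_on with
    | zero => intro q; simp
    | succ k ih =>
      intro q
      have hzp : (θm ^ ((k : ℤ) + 1)) q = (θm ^ (k : ℤ)) (θm q) := by
        rw [zpow_add_one]
        rfl
      rw [hzp, ih (θm q), hψconj q, zpow_add_one]
      group
    | pred k ih =>
      intro q
      have hzp : (θm ^ (-(k : ℤ) - 1)) q = (θm ^ (-(k : ℤ))) (θm⁻¹ q) := by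
        rw [zpow_sub_one]
        rfl
      rw [hzp, ih (θm⁻¹ q), hψconjinv q, zpow_sub_one]
      group
  have compat : ∀ g : Multiplicative ℤ,
      ψ.comp ((zpowersHom (MulAut (Multiplicative Zinv6)) θm g) :
          MulAut (Multiplicative Zinv6)).toMonoidHom
        = (MulAut.conj (zpowersHom F t g)).toMonoidHom.comp ψ := by
    intro g
    ext q
    simp only [MonoidHom.comp_apply, MulEquiv.coe_toMonoidHom, MulAut.conj_apply,
      zpowersHom_apply]
    exact main g.toAdd q
  set L : Z16Rtimes →* F := SemidirectProduct.lift ψ (zpowersHom F t) compat with hL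
  have hina : a ∈ L.range := by
    refine ⟨SemidirectProduct.inl (Multiplicative.ofAdd ⟨1, one_mem_Zinv6⟩), ?_⟩
    rw [hL, SemidirectProduct.lift_inl]
    show a ^ (Emap n (⟨1, one_mem_Zinv6⟩ : Zinv6)).val = a
    rw [Emap_one hcop]
    have h1 : ((1 : ℕ) : ZMod n) = (1 : ZMod n) := Nat.cast_one
    rw [← pow_val_eq a h1, pow_one]
  have hint : t ∈ L.range := by
    refine ⟨SemidirectProduct.inr (Multiplicative.ofAdd (1 : ℤ)), ?_⟩
    rw [hL, SemidirectProduct.lift_inr]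
    show t ^ (1 : ℤ) = t
    exact zpow_one t
  refine ⟨L, ?_⟩
  rw [← MonoidHom.range_eq_top, eq_top_iff, ← hgen, Subgroup.closure_le]
  intro x hx
  rcases Set.mem_insert_iff.1 hx with hx | hx
  · rw [hx]; exact hina
  · rw [Set.mem_singleton_iff.1 hx]; exact hint

end Forward



section Backward

lemma backward_dir {F : Type} [Group F] [Finite F] (f : Z16Rtimes →* F)
    (hf : Function.Surjective f) : ∃ g : BS23 →* F, Function.Surjective g := by
  set αH : Multiplicative Zinv6 →* F := f.comp SemidirectProduct.inl with hαH
  set α : Zinv6 → F := fun x => αH (Multiplicative.ofAdd x) with hα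
  set T : F := f (SemidirectProduct.inr (Multiplicative.ofAdd (1 : ℤ))) with hT
  have hadd : ∀ x y : Zinv6, α (x + y) = α x * α y := by
    intro x y
    show αH (Multiplicative.ofAdd (x + y)) = _
    rw [show Multiplicative.ofAdd (x + y)
      = Multiplicative.ofAdd x * Multiplicative.ofAdd y from rfl, map_mul]
  have hconj : ∀ x : Zinv6, T * α x * T⁻¹ = α (threeHalves x) := by
    intro x
    have h2 : (zpowersHom (MulAut (Multiplicative Zinv6))
        (AddEquiv.toMultiplicative threeHalves)) (Multiplicative.ofAdd (1 : ℤ))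
        (Multiplicative.ofAdd x) = Multiplicative.ofAdd (threeHalves x) := by
      show (AddEquiv.toMultiplicative threeHalves ^ (Multiplicative.toAdd
        (Multiplicative.ofAdd (1 : ℤ)))) (Multiplicative.ofAdd x) = _
      rw [show Multiplicative.toAdd (Multiplicative.ofAdd (1 : ℤ)) = 1 from rfl, zpow_one]
      rfl
    have h0 := SemidirectProduct.inl_aut
      (φ := zpowersHom (MulAut (Multiplicative Zinv6)) (AddEquiv.toMultiplicative threeHalves))
      (Multiplicative.ofAdd (1 : ℤ)) (Multiplicative.ofAdd x)
    rw [map_inv, h2] at h0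
    have h3 := congrArg f h0
    rw [map_mul, map_mul, map_inv] at h3
    exact h3.symm
  have hrel : ∀ s : Zinv6, T * (α s) ^ 2 * T⁻¹ = (α s) ^ 3 := by
    intro s
    have hp2 : (α s) ^ 2 = α (s + s) := by rw [hadd s s, pow_two]
    have hp3 : (α s) ^ 3 = α (s + s + s) := by
      rw [hadd (s + s) s, hadd s s, pow_succ, pow_two]
    have hth : threeHalves (s + s) = s + s + s := by
      apply Subtype.ext
      show (3 / 2 : ℚ) * (((s + s : Zinv6)) : ℚ) = ((s + s + s : Zinv6) : ℚ)
      push_cast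
      ring
    rw [hp2, hp3, ← hth]
    exact hconj (s + s)
  set A : F := α ⟨1, one_mem_Zinv6⟩ with hA
  have hlift : ∀ r ∈ bsRels, FreeGroup.lift (![A, T] : Fin 2 → F) r = 1 := by
    intro r hr
    rw [show bsRels = {FreeGroup.of 1 * FreeGroup.of 0 ^ 2 * (FreeGroup.of 1)⁻¹
      * (FreeGroup.of 0 ^ 3)⁻¹} from rfl, Set.mem_singleton_iff] at hr
    subst hr
    simp only [map_mul, map_inv, map_pow, FreeGroup.lift_apply_of]
    show (![A, T] : Fin 2 → F) 1 * (![A, T] : Fin 2 → F) 0 ^ 2 * ((![A, T] : Fin 2 → F) 1)⁻¹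
      * ((![A, T] : Fin 2 → F) 0 ^ 3)⁻¹ = 1
    simp only [Matrix.cons_val_zero, Matrix.cons_val_one, Matrix.head_cons]
    rw [hA, hrel ⟨1, one_mem_Zinv6⟩]
    group
  set g : BS23 →* F := PresentedGroup.toGroup hlift with hg
  have hg0 : g (PresentedGroup.of 0) = A := by
    rw [hg, PresentedGroup.toGroup.of]
    simp
  have hg1 : g (PresentedGroup.of 1) = T := by
    rw [hg, PresentedGroup.toGroup.of]
    simp
  have hzsmul : ∀ (z : ℤ) (x : Zinv6), α (z • x) = (α x) ^ z := by
    intro z x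
    show αH (Multiplicative.ofAdd (z • x)) = _
    rw [ofAdd_zsmul, map_zpow]
  have hmem6 : (6 : ℚ)⁻¹ ≠ 0 := by norm_num
  have hspowmem : ∀ k : ℕ, ((6 : ℚ)⁻¹ ^ k) ∈ Zinv6 := by
    intro k
    refine ⟨1, k, ?_⟩
    push_cast
    rw [one_div, inv_pow]
  set spow : ℕ → Zinv6 := fun k => ⟨(6 : ℚ)⁻¹ ^ k, hspowmem k⟩ with hspow
  have hs : ∀ k : ℕ, α (spow k) ∈ g.range := by
    intro k
    induction k with
    | zero =>
      have h0 : spow 0 = ⟨1, one_mem_Zinv6⟩ := by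
        apply Subtype.ext
        show ((6 : ℚ)⁻¹) ^ 0 = 1
        rw [pow_zero]
      rw [h0]
      exact ⟨PresentedGroup.of 0, hg0⟩
    | succ k ih =>
      have hc := coprime_six_of_rel (hrel (spow (k + 1)))
      obtain ⟨u, hu⟩ := exists_pow_root (α (spow (k + 1))) (m := 6) hc
      have h6 : (α (spow (k + 1))) ^ (6 : ℕ) = α (spow k) := by
        have h1 : (6 : ℤ) • spow (k + 1) = spow k := by
          apply Subtype.ext
          push_cast [zsmul_eq_mul]
          show (6 : ℚ) * ((6 : ℚ)⁻¹ ^ (k + 1)) = (6 : ℚ)⁻¹ ^ k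
          rw [pow_succ]
          field_simp
        rw [← h1, hzsmul]
        norm_cast
      rw [← hu, h6]
      exact pow_mem ih u
  have hxmem : ∀ x : Zinv6, α x ∈ g.range := by
    intro x
    obtain ⟨m, k, hx⟩ := x.2
    have h1 : x = m • spow k := by
      apply Subtype.ext
      have h2 : ((m • spow k : Zinv6) : ℚ) = (m : ℚ) * ((6 : ℚ)⁻¹) ^ k := by
        push_cast [zsmul_eq_mul]
        ring
      rw [h2, hx, div_eq_mul_inv, inv_pow]
    rw [h1, hzsmul]
    exact zpow_mem (hs k) m
  have hTmem : T ∈ g.range := ⟨PresentedGroup.of 1, hg1⟩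
  refine ⟨g, ?_⟩
  rw [← MonoidHom.range_eq_top, eq_top_iff]
  intro x _
  obtain ⟨y, rfl⟩ := hf x
  rw [← SemidirectProduct.inl_left_mul_inr_right y, map_mul]
  apply mul_mem
  · show f (SemidirectProduct.inl y.left) ∈ g.range
    have h1 : f (SemidirectProduct.inl y.left) = α (Multiplicative.toAdd y.left) := rfl
    rw [h1]
    exact hxmem _
  · show f (SemidirectProduct.inr y.right) ∈ g.range
    have h1 : y.right = (Multiplicative.ofAdd (1 : ℤ)) ^ (Multiplicative.toAdd y.right) := by
      rw [← ofAdd_zsmul, smul_eq_mul, mul_one, ofAdd_toAdd]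
    have h2 : f (SemidirectProduct.inr y.right) = T ^ (Multiplicative.toAdd y.right) := by
      conv_lhs => rw [h1]
      rw [map_zpow, map_zpow]
    rw [h2]
    exact zpow_mem hTmem _

end Backward


/-- `BS(2,3)` and `ℤ[1/6] ⋊_{3/2} ℤ` have the same finite quotients. -/
theorem bs23_z16_rtimes_same_finite_quotients :
    ∀ (F : Type) [Group F] [Finite F],
      (∃ f : BS23 →* F, Function.Surjective f) ↔
      (∃ f : Z16Rtimes →* F, Function.Surjective f) := by
  intro F _ _
  constructor
  · rintro ⟨f, hf⟩
    set a : F := f (PresentedGroup.of 0) with ha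
    set t : F := f (PresentedGroup.of 1) with ht
    have hkey : ((QuotientGroup.mk (FreeGroup.of 1 * FreeGroup.of 0 ^ 2 * (FreeGroup.of 1)⁻¹
        * (FreeGroup.of 0 ^ 3)⁻¹) : PresentedGroup bsRels)) = 1 :=
      (QuotientGroup.eq_one_iff _).2 (Subgroup.subset_normalClosure (Set.mem_singleton _))
    have hkey2 : (PresentedGroup.of (rels := bsRels) 1) * (PresentedGroup.of 0) ^ 2
        * (PresentedGroup.of 1)⁻¹ * ((PresentedGroup.of 0) ^ 3)⁻¹ = 1 := hkey
    have rel : t * a ^ 2 * t⁻¹ = a ^ 3 := by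
      have h3 := congrArg f hkey2
      simp only [map_mul, map_inv, map_pow, map_one] at h3
      exact mul_inv_eq_one.1 h3
    have hgen : Subgroup.closure ({a, t} : Set F) = ⊤ := by
      rw [eq_top_iff]
      intro x _
      obtain ⟨w, rfl⟩ := hf x
      have hw : w ∈ Subgroup.closure (Set.range (PresentedGroup.of (rels := bsRels))) := by
        rw [PresentedGroup.closure_range_of]
        trivial
      refine Subgroup.closure_induction (p := fun w _ => f w ∈ Subgroup.closure {a, t})
        ?_ ?_ ?_ ?_ hw
      · rintro y ⟨i, rfl⟩
        fin_cases i
        · exact Subgroup.subset_closure (Set.mem_insert _ _)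
        · exact Subgroup.subset_closure (Set.mem_insert_iff.2 (Or.inr rfl))
      · show f 1 ∈ Subgroup.closure {a, t}
        rw [map_one]
        exact one_mem _
      · intro y z _ _ hy hz
        show f (y * z) ∈ Subgroup.closure {a, t}
        rw [map_mul]
        exact mul_mem hy hz
      · intro y _ hy
        show f y⁻¹ ∈ Subgroup.closure {a, t}
        rw [map_inv]
        exact inv_mem hy
    exact forward_dir rel hgen
  · rintro ⟨f, hf⟩
    exact backward_dir f hf
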